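/- In the setting of the previous quantile representation: for any random variable L with finite first moment and any α ∈ (0,1), writing h(t) := F_L^{-1}(1−t) − ∫_{(t,1]} a^{-1} dλ_L(a) for a probability measure λ_L on (0,1], the identity ∫_0^α [h(t) − h(α)] dt = E_P[(L − F_L^{-1}(1−α))_+] − λ_L((0,α]) holds. -/

import Mathlib

open MeasureTheory Set Filter
open scoped ENNReal Topology

/-- Identity underlying the quantile representation: with
`h(t) = F_L⁻¹(1−t) − ∫_{(t,1]} a⁻¹ dλ_L(a)`, one has
`∫₀^α [h(t) − h(α)] dt = E[(L − F_L⁻¹(1−α))_+] − λ_L((0,α])`. -/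
theorem quantile_representation_identity
    {Ω : Type*} [MeasurableSpace Ω] (P : Measure Ω) [IsProbabilityMeasure P]
    (L : Ω → ℝ) (hL : Integrable L P)
    (lam : Measure ℝ) [IsProbabilityMeasure lam] (hsupp : lam (Set.Ioc (0 : ℝ) 1)ᶜ = 0)
    (α : ℝ) (hα : α ∈ Set.Ioo (0 : ℝ) 1)
    (h : ℝ → ℝ)
    (hdef : ∀ t : ℝ, h t = sInf {s : ℝ | ENNReal.ofReal (1 - t) ≤ P {ω | L ω ≤ s}}
        - ∫ a in Set.Ioc t 1, a⁻¹ ∂lam) :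
    (∫ t in (0 : ℝ)..α, (h t - h α))
      = (∫ ω, max (L ω - sInf {s : ℝ | ENNReal.ofReal (1 - α) ≤ P {ω' | L ω' ≤ s}}) 0 ∂P)
        - (lam (Set.Ioc 0 α)).toReal := by
  obtain ⟨hα0, hα1⟩ := hα
  -- replace L by a measurable representative
  set L' : Ω → ℝ := hL.1.mk L with hL'def
  have hL'meas : Measurable L' := hL.1.stronglyMeasurable_mk.measurable
  have hLL' : L =ᵐ[P] L' := hL.1.ae_eq_mk
  have hL' : Integrable L' P := hL.congr hLL'
  have hPL : ∀ s : ℝ, P {ω | L ω ≤ s} = P {ω | L' ω ≤ s} := by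
    intro s
    refine measure_congr (hLL'.mono fun ω hω => ?_)
    show (L ω ≤ s) = (L' ω ≤ s)
    rw [hω]
  simp only [hPL] at hdef ⊢
  set F : ℝ → ℝ≥0∞ := fun x => P {ω | L' ω ≤ x} with hFdef
  set q : ℝ → ℝ := fun t => sInf {s : ℝ | ENNReal.ofReal (1 - t) ≤ F s} with hqdef
  have hFmono : Monotone F := fun x y hxy =>
    measure_mono (fun ω hω => le_trans hω hxy)
  have hFle : ∀ x, F x ≤ 1 := fun x => prob_le_one
  have hFne : ∀ x, F x ≠ ∞ := fun x => (lt_of_le_of_lt (hFle x) ENNReal.one_lt_top).ne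
  have hSne : ∀ t : ℝ, 0 < t → {s : ℝ | ENNReal.ofReal (1 - t) ≤ F s}.Nonempty := by
    intro t ht
    have hU : (⋃ n : ℕ, L' ⁻¹' Iic (n:ℝ)) = Set.univ := by
      ext ω; simp only [Set.mem_iUnion, Set.mem_preimage, Set.mem_Iic, Set.mem_univ, iff_true]
      exact exists_nat_ge (L' ω)
    have hmono : Monotone fun n : ℕ => L' ⁻¹' Iic (n:ℝ) := by
      intro m n hmn ω hω
      simp only [Set.mem_preimage, Set.mem_Iic] at hω ⊢
      exact le_trans hω (by exact_mod_cast Nat.cast_le.mpr hmn)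
    have htend := tendsto_measure_iUnion_atTop (μ := P) hmono
    rw [hU, measure_univ] at htend
    have hlt : ENNReal.ofReal (1 - t) < 1 := ENNReal.ofReal_lt_one.mpr (by linarith)
    obtain ⟨n, hn⟩ := (htend.eventually (eventually_gt_nhds hlt)).exists
    exact ⟨(n:ℝ), le_of_lt hn⟩
  have hSbdd : ∀ t : ℝ, t < 1 → BddBelow {s : ℝ | ENNReal.ofReal (1 - t) ≤ F s} := by
    intro t ht
    have hI : (⋂ n : ℕ, L' ⁻¹' Iic (-(n:ℝ))) = ∅ := by
      ext ω; simp only [Set.mem_iInter, Set.mem_preimage, Set.mem_Iic,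
        Set.mem_empty_iff_false, iff_false]
      push_neg
      obtain ⟨n, hn⟩ := exists_nat_gt (-L' ω)
      exact ⟨n, by linarith⟩
    have hanti : Antitone fun n : ℕ => L' ⁻¹' Iic (-(n:ℝ)) := by
      intro m n hmn ω hω
      simp only [Set.mem_preimage, Set.mem_Iic] at hω ⊢
      have : (m:ℝ) ≤ (n:ℝ) := by exact_mod_cast hmn
      linarith
    have htend := tendsto_measure_iInter_atTop (μ := P)
      (fun n => (hL'meas measurableSet_Iic).nullMeasurableSet) hanti ⟨0, measure_ne_top P _⟩
    rw [hI, measure_empty] at htend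
    have hpos : (0:ℝ≥0∞) < ENNReal.ofReal (1 - t) := ENNReal.ofReal_pos.mpr (by linarith)
    obtain ⟨n, hn⟩ := (htend.eventually (eventually_lt_nhds hpos)).exists
    refine ⟨-(n:ℝ), fun s hs => ?_⟩
    by_contra hcon
    push_neg at hcon
    exact absurd (le_trans hs (hFmono hcon.le)) (not_le.mpr hn)
  have hFright : ∀ (x : ℝ) (r : ℝ≥0∞), F x < r → ∃ y, x < y ∧ F y < r := by
    intro x r hxr
    have hI : (⋂ n : ℕ, L' ⁻¹' Iic (x + ((n:ℝ)+1)⁻¹)) = L' ⁻¹' Iic x := by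
      ext ω; simp only [Set.mem_iInter, Set.mem_preimage, Set.mem_Iic]
      constructor
      · intro hall
        by_contra hcon
        push_neg at hcon
        obtain ⟨n, hn⟩ := exists_nat_gt (L' ω - x)⁻¹
        have hpos : 0 < L' ω - x := by linarith
        have h1 : ((n:ℝ)+1)⁻¹ < L' ω - x := by
          rw [inv_lt_comm₀ (by positivity) hpos]
          exact hn.trans (by linarith)
        linarith [hall n]
      · intro hle n
        have : (0:ℝ) < ((n:ℝ)+1)⁻¹ := by positivity
        linarith
    have hanti : Antitone fun n : ℕ => L' ⁻¹' Iic (x + ((n:ℝ)+1)⁻¹) := by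
      intro m n hmn ω hω
      simp only [Set.mem_preimage, Set.mem_Iic] at hω ⊢
      have hc : (m:ℝ) ≤ (n:ℝ) := by exact_mod_cast hmn
      have : ((n:ℝ)+1)⁻¹ ≤ ((m:ℝ)+1)⁻¹ := by
        apply inv_anti₀ (by positivity); linarith
      linarith
    have htend := tendsto_measure_iInter_atTop (μ := P)
      (fun n => (hL'meas measurableSet_Iic).nullMeasurableSet) hanti ⟨0, measure_ne_top P _⟩
    rw [hI] at htend
    obtain ⟨n, hn⟩ := (htend.eventually (eventually_lt_nhds hxr)).exists
    refine ⟨x + ((n:ℝ)+1)⁻¹, ?_, hn⟩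
    have : (0:ℝ) < ((n:ℝ)+1)⁻¹ := by positivity
    linarith
  have hq_lt : ∀ t ∈ Set.Ioo (0:ℝ) 1, ∀ x : ℝ, x < q t ↔ F x < ENNReal.ofReal (1 - t) := by
    intro t ht x
    constructor
    · intro hx
      by_contra hcon
      push_neg at hcon
      have : q t ≤ x := csInf_le (hSbdd t ht.2) hcon
      linarith
    · intro hFx
      obtain ⟨y, hxy, hy⟩ := hFright x _ hFx
      have hsub : {s : ℝ | ENNReal.ofReal (1 - t) ≤ F s} ⊆ Set.Ici y := by
        intro s hs
        by_contra hcon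
        simp only [Set.mem_Ici, not_le] at hcon
        exact absurd (le_trans hs (hFmono hcon.le)) (not_le.mpr hy)
      have : y ≤ q t := le_csInf (hSne t ht.1) hsub
      linarith
  set c : ℝ := q α with hcdef
  have hc_mem : ENNReal.ofReal (1 - α) ≤ F c := by
    by_contra hcon
    exact absurd ((hq_lt α ⟨hα0, hα1⟩ c).mpr (not_le.mp hcon)) (lt_irrefl c)
  have hcq : ∀ t ∈ Set.Ioc (0:ℝ) α, c ≤ q t := by
    intro t ht
    refine csInf_le_csInf (hSbdd α hα1) (hSne t ht.1) (fun s hs => ?_)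
    exact le_trans (ENNReal.ofReal_le_ofReal (by linarith [ht.2])) hs
  set μ₀ : Measure ℝ := volume.restrict (Set.Ioc 0 α) with hμ₀
  -- superlevel sets of q within Ioc 0 α
  have hlevel : ∀ x : ℝ, ∀ t ∈ Set.Ioc (0:ℝ) α, (x < q t ↔ t < 1 - (F x).toReal) := by
    intro x t ht
    rw [hq_lt t ⟨ht.1, lt_of_le_of_lt ht.2 hα1⟩ x,
      ENNReal.lt_ofReal_iff_toReal_lt (hFne x)]
    constructor <;> intro <;> linarith
  -- measurable version of q on Ioc 0 α
  set q1 : ℝ → ℝ := fun t => if t ∈ Set.Ioc (0:ℝ) α then q t else c with hq1def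
  have hq1meas : Measurable q1 := by
    apply measurable_of_Ioi
    intro x
    have : q1 ⁻¹' Set.Ioi x =
        (Set.Ioc 0 α ∩ Set.Iio (1 - (F x).toReal)) ∪
          ((Set.Ioc (0:ℝ) α)ᶜ ∩ (if x < c then Set.univ else (∅ : Set ℝ))) := by
      ext t
      by_cases ht : t ∈ Set.Ioc (0:ℝ) α
      · simp only [Set.mem_preimage, Set.mem_Ioi, hq1def, if_pos ht, Set.mem_union,
          Set.mem_inter_iff, Set.mem_compl_iff, ht, not_true, false_and, or_false,
          Set.mem_Iio, true_and]
        exact hlevel x t ht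
      · simp only [Set.mem_preimage, Set.mem_Ioi, hq1def, if_neg ht, Set.mem_union,
          Set.mem_inter_iff, Set.mem_compl_iff, ht, false_and, true_and, not_false_iff,
          false_or]
        by_cases hxc : x < c <;> simp [hxc]
    rw [this]
    refine ((measurableSet_Ioc.inter measurableSet_Iio).union
      (measurableSet_Ioc.compl.inter ?_))
    by_cases hxc : x < c <;> simp [hxc]
  have hq1ae : (fun t => q t - c) =ᵐ[μ₀] (fun t => q1 t - c) := by
    filter_upwards [ae_restrict_mem measurableSet_Ioc] with t ht
    simp only [hq1def]
    rw [if_pos ht]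
  have hg_nn : 0 ≤ᵐ[μ₀] fun t => q t - c := by
    filter_upwards [ae_restrict_mem measurableSet_Ioc] with t ht
    have := hcq t ht
    simp only [Pi.zero_apply]
    linarith
  have hg_aem : AEMeasurable (fun t => q t - c) μ₀ :=
    ((hq1meas.sub measurable_const).aemeasurable).congr hq1ae.symm
  -- tail-probability description
  have hFne' : ∀ x : ℝ, P {ω | L' ω ≤ x} ≠ ∞ := by
    intro x
    have := hFne x
    rwa [hFdef] at this
  have htail : ∀ x : ℝ, P {ω | x < L' ω} = 1 - F x := by
    intro x
    have heq : {ω | x < L' ω} = {ω | L' ω ≤ x}ᶜ := by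
      ext ω; simp [not_le]
    have hcompl := measure_compl (μ := P) (s := {ω | L' ω ≤ x})
      (hL'meas measurableSet_Iic) (hFne' x)
    rw [heq, hcompl, measure_univ, hFdef]
  -- layer cake for the LHS
  have hmeasL : ∀ s ∈ Set.Ioi (0:ℝ), μ₀ {t | s < q t - c} = P {ω | c + s < L' ω} := by
    intro s hs
    rw [Measure.restrict_apply' measurableSet_Ioc]
    have hβ : 1 - (F (c + s)).toReal ≤ α := by
      have h1 : ENNReal.ofReal (1 - α) ≤ F (c + s) :=
        le_trans hc_mem (hFmono (by linarith [Set.mem_Ioi.mp hs]))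
      have h2 : 1 - α ≤ (F (c + s)).toReal := by
        have := ENNReal.toReal_mono (hFne _) h1
        rwa [ENNReal.toReal_ofReal (by linarith)] at this
      linarith
    have hset : {t | s < q t - c} ∩ Set.Ioc 0 α = Set.Ioo 0 (1 - (F (c + s)).toReal) := by
      ext t
      simp only [Set.mem_inter_iff, Set.mem_setOf_eq, Set.mem_Ioc, Set.mem_Ioo]
      constructor
      · rintro ⟨hst, ht⟩
        refine ⟨ht.1, ?_⟩
        exact (hlevel (c + s) t ht).mp (by linarith)
      · rintro ⟨ht0, htβ⟩
        have htα : t ∈ Set.Ioc (0:ℝ) α := ⟨ht0, le_of_lt (lt_of_lt_of_le htβ hβ)⟩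
        have := (hlevel (c + s) t htα).mpr htβ
        exact ⟨by linarith, htα.1, htα.2⟩
    rw [hset, Real.volume_Ioo, sub_zero, htail]
    have hFle1 : F (c + s) ≤ 1 := hFle _
    rw [← ENNReal.toReal_one, ← ENNReal.toReal_sub_of_le hFle1 ENNReal.one_ne_top,
      ENNReal.ofReal_toReal]
    exact (lt_of_le_of_lt (tsub_le_self) ENNReal.one_lt_top).ne
  -- RHS function
  set f : Ω → ℝ := fun ω => max (L' ω - c) 0 with hfdef
  have hf_nn : 0 ≤ᵐ[P] f := Eventually.of_forall fun ω => le_max_right _ _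
  have hf_meas : Measurable f := (hL'meas.sub measurable_const).max measurable_const
  have hf_int : Integrable f P := (hL'.sub (integrable_const c)).pos_part
  have hmeasR : ∀ s ∈ Set.Ioi (0:ℝ), P {ω | s < f ω} = P {ω | c + s < L' ω} := by
    intro s hs
    congr 1
    ext ω
    simp only [Set.mem_setOf_eq, hfdef, lt_max_iff]
    constructor
    · rintro (hh | hh)
      · linarith
      · exact absurd hh (not_lt.mpr (le_of_lt (Set.mem_Ioi.mp hs)))
    · intro hh; left; linarith
  have hkeyL : ∫⁻ t, ENNReal.ofReal (q t - c) ∂μ₀ = ∫⁻ s in Set.Ioi 0, P {ω | c + s < L' ω} := by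
    rw [lintegral_eq_lintegral_meas_lt μ₀ hg_nn hg_aem]
    exact setLIntegral_congr_fun measurableSet_Ioi hmeasL
  have hkeyR : ∫⁻ ω, ENNReal.ofReal (f ω) ∂P = ∫⁻ s in Set.Ioi 0, P {ω | c + s < L' ω} := by
    rw [lintegral_eq_lintegral_meas_lt P hf_nn hf_meas.aemeasurable]
    exact setLIntegral_congr_fun measurableSet_Ioi hmeasR
  have hfin : ∫⁻ ω, ENNReal.ofReal (f ω) ∂P < ∞ := hf_int.lintegral_lt_top
  set g2 : ℝ → ℝ := fun t => ∫ a in Set.Ioc t 1, a⁻¹ ∂lam with hg2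
  set G : ℝ → ℝ≥0∞ := fun t => ∫⁻ a in Set.Ioc t α, ENNReal.ofReal a⁻¹ ∂lam with hG
  -- integrability of a⁻¹ on Ioc t 1
  have hint : ∀ t : ℝ, 0 < t → IntegrableOn (fun a : ℝ => a⁻¹) (Set.Ioc t 1) lam := by
    intro t ht
    refine Measure.integrableOn_of_bounded (M := t⁻¹) (measure_ne_top lam _)
      measurable_inv.aestronglyMeasurable ?_
    filter_upwards [ae_restrict_mem measurableSet_Ioc] with a ha
    rw [Real.norm_eq_abs, abs_inv, abs_of_pos (lt_trans ht ha.1)]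
    rw [inv_le_inv₀ (lt_trans ht ha.1) ht]
    exact ha.1.le
  -- split of g2
  have hsplit : ∀ t ∈ Set.Ioc (0:ℝ) α, g2 t - g2 α = (G t).toReal := by
    intro t ht
    have hunion : Set.Ioc t 1 = Set.Ioc t α ∪ Set.Ioc α 1 :=
      (Set.Ioc_union_Ioc_eq_Ioc ht.2 hα1.le).symm
    have hdisj : Disjoint (Set.Ioc t α) (Set.Ioc α 1) := Set.Ioc_disjoint_Ioc_of_le le_rfl
    have hi1 : IntegrableOn (fun a : ℝ => a⁻¹) (Set.Ioc t α) lam :=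
      (hint t ht.1).mono_set (by rw [hunion]; exact Set.subset_union_left)
    have hi2 : IntegrableOn (fun a : ℝ => a⁻¹) (Set.Ioc α 1) lam :=
      (hint t ht.1).mono_set (by rw [hunion]; exact Set.subset_union_right)
    have : g2 t = (∫ a in Set.Ioc t α, a⁻¹ ∂lam) + g2 α := by
      rw [hg2]
      simp only
      rw [hunion, setIntegral_union hdisj measurableSet_Ioc hi1 hi2]
    rw [this]
    have : ∫ a in Set.Ioc t α, a⁻¹ ∂lam = (G t).toReal := by
      rw [hG]
      simp only
      rw [integral_eq_lintegral_of_nonneg_ae ?_ measurable_inv.aestronglyMeasurable]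
      filter_upwards [ae_restrict_mem measurableSet_Ioc] with a ha
      simp only [Pi.zero_apply]
      exact inv_nonneg.mpr (lt_trans ht.1 ha.1).le
    linarith
  have hGanti : Antitone G := by
    intro t t' htt'
    exact lintegral_mono_set (Set.Ioc_subset_Ioc_left htt')
  have hGmeas : Measurable fun t => (G t).toReal := hGanti.measurable.ennreal_toReal
  have hGfin : ∀ t : ℝ, 0 < t → G t < ∞ := by
    intro t ht
    have hb : G t ≤ ENNReal.ofReal t⁻¹ * lam (Set.Ioc t α) := by
      rw [hG]; simp only
      calc ∫⁻ a in Set.Ioc t α, ENNReal.ofReal a⁻¹ ∂lam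
          ≤ ∫⁻ _ in Set.Ioc t α, ENNReal.ofReal t⁻¹ ∂lam := by
            refine setLIntegral_mono measurable_const fun a ha => ?_
            exact ENNReal.ofReal_le_ofReal (by
              rw [inv_le_inv₀ (lt_trans ht ha.1) ht]; exact ha.1.le)
        _ = ENNReal.ofReal t⁻¹ * lam (Set.Ioc t α) := by
            rw [setLIntegral_const]
    exact lt_of_le_of_lt hb (ENNReal.mul_lt_top ENNReal.ofReal_lt_top (measure_lt_top _ _))
  -- Tonelli
  have hTon : ∫⁻ t in Set.Ioc (0:ℝ) α, G t ∂volume = lam (Set.Ioc 0 α) := by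
    have hswap_meas : AEMeasurable
        (Function.uncurry fun t a => (Set.Ioc t α).indicator (fun a => ENNReal.ofReal a⁻¹) a)
        (μ₀.prod lam) := by
      have heq : (Function.uncurry fun t a => (Set.Ioc t α).indicator
            (fun a => ENNReal.ofReal a⁻¹) a)
          = Set.indicator {p : ℝ × ℝ | p.1 < p.2 ∧ p.2 ≤ α}
              (fun p => ENNReal.ofReal (p.2)⁻¹) := by
        funext p
        by_cases hp : p.2 ∈ Set.Ioc p.1 α
        · rw [Function.uncurry]
          simp only [Set.indicator_of_mem hp]
          rw [Set.indicator_of_mem (by exact hp)]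
        · rw [Function.uncurry]
          simp only [Set.indicator_of_notMem hp]
          rw [Set.indicator_of_notMem (by exact hp)]
      rw [heq]
      exact (Measurable.indicator (measurable_snd.inv.ennreal_ofReal)
        ((measurableSet_lt measurable_fst measurable_snd).inter
          (measurable_snd measurableSet_Iic))).aemeasurable
    calc ∫⁻ t in Set.Ioc (0:ℝ) α, G t ∂volume
        = ∫⁻ t, ∫⁻ a, (Set.Ioc t α).indicator (fun a => ENNReal.ofReal a⁻¹) a ∂lam ∂μ₀ := by
          refine lintegral_congr fun t => ?_
          rw [hG]; simp only
          rw [lintegral_indicator measurableSet_Ioc]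
      _ = ∫⁻ a, ∫⁻ t, (Set.Ioc t α).indicator (fun a => ENNReal.ofReal a⁻¹) a ∂μ₀ ∂lam :=
          lintegral_lintegral_swap hswap_meas
      _ = ∫⁻ a, (Set.Ioc (0:ℝ) α).indicator (fun _ => 1) a ∂lam := by
          refine lintegral_congr fun a => ?_
          by_cases ha : a ∈ Set.Ioc (0:ℝ) α
          · rw [Set.indicator_of_mem ha]
            have hind : ∀ t : ℝ, (Set.Ioc t α).indicator (fun a => ENNReal.ofReal a⁻¹) a
                = (Set.Iio a).indicator (fun _ => ENNReal.ofReal a⁻¹) t := by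
              intro t
              by_cases hta : t < a
              · rw [Set.indicator_of_mem (Set.mem_Ioc.mpr ⟨hta, ha.2⟩),
                  Set.indicator_of_mem (show t ∈ Set.Iio a from hta)]
              · rw [Set.indicator_of_notMem (fun hc => hta (Set.mem_Ioc.mp hc).1),
                  Set.indicator_of_notMem (show t ∉ Set.Iio a from hta)]
            simp_rw [hind]
            rw [lintegral_indicator_const measurableSet_Iio]
            rw [hμ₀, Measure.restrict_apply' measurableSet_Ioc]
            have : Set.Iio a ∩ Set.Ioc 0 α = Set.Ioo 0 a := by
              ext t
              simp only [Set.mem_inter_iff, Set.mem_Iio, Set.mem_Ioc, Set.mem_Ioo]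
              constructor
              · rintro ⟨h1, h2, h3⟩; exact ⟨h2, h1⟩
              · rintro ⟨h1, h2⟩; exact ⟨h2, h1, le_trans h2.le ha.2⟩
            rw [this, Real.volume_Ioo, sub_zero, ← ENNReal.ofReal_mul (inv_nonneg.mpr ha.1.le),
              inv_mul_cancel₀ (ne_of_gt ha.1), ENNReal.ofReal_one]
          · rw [Set.indicator_of_notMem ha]
            rw [← lintegral_zero (μ := μ₀)]
            refine lintegral_congr_ae ?_
            filter_upwards [ae_restrict_mem measurableSet_Ioc] with t ht
            rw [Set.indicator_of_notMem]
            intro hc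
            exact ha ⟨lt_trans ht.1 hc.1, hc.2⟩
      _ = lam (Set.Ioc (0:ℝ) α) := by
          rw [lintegral_indicator_const measurableSet_Ioc, one_mul]
  -- conclusion
  have hsplit' : (fun t => g2 t - g2 α) =ᵐ[μ₀] fun t => (G t).toReal := by
    filter_upwards [ae_restrict_mem measurableSet_Ioc] with t ht
    exact hsplit t ht
  have hGint : Integrable (fun t => (G t).toReal) μ₀ := by
    refine ⟨hGmeas.aestronglyMeasurable, ?_⟩
    rw [hasFiniteIntegral_iff_ofReal (Eventually.of_forall fun t => ENNReal.toReal_nonneg)]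
    calc ∫⁻ t, ENNReal.ofReal (G t).toReal ∂μ₀ ≤ ∫⁻ t, G t ∂μ₀ :=
          lintegral_mono fun t => ENNReal.ofReal_toReal_le
      _ = lam (Set.Ioc 0 α) := hTon
      _ < ∞ := measure_lt_top _ _
  -- conclusions of part A
  have hqint : Integrable (fun t => q t - c) μ₀ := by
    refine ⟨hg_aem.aestronglyMeasurable, ?_⟩
    rw [hasFiniteIntegral_iff_ofReal hg_nn, hkeyL, ← hkeyR]
    exact hfin
  have hqval : ∫ t in Set.Ioc (0:ℝ) α, (q t - c) = ∫ ω, max (L' ω - c) 0 ∂P := by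
    rw [show ∫ t in Set.Ioc (0:ℝ) α, (q t - c) = ∫ t, (q t - c) ∂μ₀ from rfl,
      integral_eq_lintegral_of_nonneg_ae hg_nn hg_aem.aestronglyMeasurable,
      integral_eq_lintegral_of_nonneg_ae hf_nn hf_meas.aestronglyMeasurable,
      hkeyL, hkeyR]
  -- conclusions of part B
  have hsplit' : (fun t => g2 t - g2 α) =ᵐ[μ₀] fun t => (G t).toReal := by
    filter_upwards [ae_restrict_mem measurableSet_Ioc] with t ht
    exact hsplit t ht
  have hGint : Integrable (fun t => (G t).toReal) μ₀ := by
    refine ⟨hGmeas.aestronglyMeasurable, ?_⟩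
    rw [hasFiniteIntegral_iff_ofReal (Eventually.of_forall fun t => ENNReal.toReal_nonneg)]
    calc ∫⁻ t, ENNReal.ofReal (G t).toReal ∂μ₀ ≤ ∫⁻ t, G t ∂μ₀ :=
          lintegral_mono fun t => ENNReal.ofReal_toReal_le
      _ = lam (Set.Ioc 0 α) := hTon
      _ < ∞ := measure_lt_top _ _
  have hBint : Integrable (fun t => g2 t - g2 α) μ₀ := hGint.congr hsplit'.symm
  have hBval : ∫ t in Set.Ioc (0:ℝ) α, (g2 t - g2 α) = (lam (Set.Ioc 0 α)).toReal := by
    rw [show (∫ t in Set.Ioc (0:ℝ) α, (g2 t - g2 α)) = ∫ t, (g2 t - g2 α) ∂μ₀ from rfl,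
      integral_congr_ae hsplit',
      integral_eq_lintegral_of_nonneg_ae
        (Eventually.of_forall fun t => ENNReal.toReal_nonneg)
        hGmeas.aestronglyMeasurable]
    congr 1
    rw [← hTon]
    refine lintegral_congr_ae ?_
    filter_upwards [ae_restrict_mem measurableSet_Ioc] with t ht
    exact ENNReal.ofReal_toReal (hGfin t ht.1).ne
  -- final assembly
  have hht : ∀ t : ℝ, h t = q t - g2 t := fun t => hdef t
  have hintegrand : ∀ t : ℝ, h t - h α = (q t - c) - (g2 t - g2 α) := by
    intro t
    rw [hht t, hht α, hcdef]
    ring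
  have hI1 : IntervalIntegrable (fun t => q t - c) volume 0 α := by
    rw [intervalIntegrable_iff, Set.uIoc_of_le hα0.le]
    exact hqint
  have hI2 : IntervalIntegrable (fun t => g2 t - g2 α) volume 0 α := by
    rw [intervalIntegrable_iff, Set.uIoc_of_le hα0.le]
    exact hBint
  have hPmax : ∫ ω, max (L ω - c) 0 ∂P = ∫ ω, max (L' ω - c) 0 ∂P := by
    refine integral_congr_ae (hLL'.mono fun ω hω => ?_)
    dsimp only
    rw [hω]
  calc ∫ t in (0:ℝ)..α, (h t - h α)
      = ∫ t in (0:ℝ)..α, ((q t - c) - (g2 t - g2 α)) := by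
        simp_rw [hintegrand]
    _ = (∫ t in (0:ℝ)..α, (q t - c)) - ∫ t in (0:ℝ)..α, (g2 t - g2 α) :=
        intervalIntegral.integral_sub hI1 hI2
    _ = (∫ t in Set.Ioc (0:ℝ) α, (q t - c)) - ∫ t in Set.Ioc (0:ℝ) α, (g2 t - g2 α) := by
        rw [intervalIntegral.integral_of_le hα0.le, intervalIntegral.integral_of_le hα0.le]
    _ = (∫ ω, max (L ω - c) 0 ∂P) - (lam (Set.Ioc 0 α)).toReal := by
        rw [hqval, hBval, hPmax]
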